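/- For every positive integer n, Σ_{p+q=n, p,q≥0} (3p)!/(p!)^3 · (3q)!/(q!)^3 ≤ 27^n, i.e. the convolution of central trinomial-type coefficients (3p)!/(p!)^3 is bounded by 27^n. -/

import Mathlib

open Nat

lemma aux18 (p : ℕ) : (2*p+1) * (3*p)! ≤ 27^p * (p !)^3 := by
  induction p with
  | zero => simp
  | succ k ih =>
    have hfac : (3*(k+1))! = (3*k+3)*((3*k+2)*((3*k+1)*(3*k)!)) := by
      have h : 3*(k+1) = 3*k+1+1+1 := by ring
      rw [h, Nat.factorial_succ, Nat.factorial_succ, Nat.factorial_succ]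
      
    rw [hfac]
    have hcoef : (2*(k+1)+1)*((3*k+3)*((3*k+2)*(3*k+1))) ≤ 27*(k+1)^3*(2*k+1) := by
      nlinarith
    calc (2*(k+1)+1) * ((3*k+3)*((3*k+2)*((3*k+1)*(3*k)!)))
        = ((2*(k+1)+1)*((3*k+3)*((3*k+2)*(3*k+1)))) * (3*k)! := by ring
      _ ≤ (27*(k+1)^3*(2*k+1)) * (3*k)! := Nat.mul_le_mul_right _ hcoef
      _ = 27*(k+1)^3*((2*k+1) * (3*k)!) := by ring
      _ ≤ 27*(k+1)^3*(27^k * (k !)^3) := Nat.mul_le_mul_left _ ih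
      _ = 27^(k+1) * ((k+1) * k !)^3 := by ring

lemma aux18q (p : ℕ) : ((3*p)! : ℚ) / ((p ! : ℚ)^3) ≤ 27^p / (2*p+1) := by
  have hf : (0:ℚ) < ((p ! : ℚ))^3 := by positivity
  have hd : (0:ℚ) < 2*(p:ℚ)+1 := by positivity
  rw [div_le_div_iff₀ hf hd]
  have := aux18 p
  have : ((2*p+1) * (3*p)! : ℚ) ≤ (27^p * (p !)^3 : ℚ) := by exact_mod_cast this
  push_cast at this ⊢
  nlinarith [this]

theorem stmt18 (n : ℕ) (hn : 0 < n) :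
    ∑ p ∈ Finset.range (n + 1),
      ((3 * p)! : ℚ) / ((p ! : ℚ) ^ 3) * (((3 * (n - p))! : ℚ) / (((n - p)! : ℚ) ^ 3))
      ≤ 27 ^ n := by
  have key : ∀ p ∈ Finset.range (n+1),
      ((3 * p)! : ℚ) / ((p ! : ℚ) ^ 3) * (((3 * (n - p))! : ℚ) / (((n - p)! : ℚ) ^ 3))
      ≤ (27:ℚ)^n / (n+1) := by
    intro p hp
    rw [Finset.mem_range] at hp
    set q := n - p with hq
    have hpq : p + q = n := by omega
    have h1 := aux18q p
    have h2 := aux18q q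
    have hp1 : (0:ℚ) < 2*(p:ℚ)+1 := by positivity
    have hq1 : (0:ℚ) < 2*(q:ℚ)+1 := by positivity
    have hnn1 : (0:ℚ) ≤ ((3 * p)! : ℚ) / ((p ! : ℚ) ^ 3) := by positivity
    have hnn2 : (0:ℚ) ≤ (((3 * q)! : ℚ) / ((q ! : ℚ) ^ 3)) := by positivity
    have hb : ((3 * p)! : ℚ) / ((p ! : ℚ) ^ 3) * (((3 * q)! : ℚ) / ((q ! : ℚ) ^ 3))
        ≤ (27^p / (2*(p:ℚ)+1)) * (27^q / (2*(q:ℚ)+1)) := by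
      apply mul_le_mul h1 h2 hnn2 (by positivity)
    refine hb.trans ?_
    have h27 : (27:ℚ)^p * 27^q = 27^n := by rw [← pow_add, hpq]
    have hlow : (n:ℚ) + 1 ≤ (2*(p:ℚ)+1) * (2*(q:ℚ)+1) := by
      have : n + 1 ≤ (2*p+1) * (2*q+1) := by nlinarith [hpq]
      exact_mod_cast this
    have e : (27:ℚ)^p / (2*(p:ℚ)+1) * (27^q / (2*(q:ℚ)+1))
        = 27^n / ((2*(p:ℚ)+1) * (2*(q:ℚ)+1)) := by
      rw [← h27]; field_simp
    rw [e]
    apply div_le_div_of_nonneg_left (by positivity) (by positivity) hlow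
  calc ∑ p ∈ Finset.range (n + 1),
      ((3 * p)! : ℚ) / ((p ! : ℚ) ^ 3) * (((3 * (n - p))! : ℚ) / (((n - p)! : ℚ) ^ 3))
      ≤ ∑ p ∈ Finset.range (n+1), (27:ℚ)^n / (n+1) := Finset.sum_le_sum key
    _ = (n+1) * ((27:ℚ)^n / (n+1)) := by
        rw [Finset.sum_const, Finset.card_range]; push_cast; ring
    _ = 27^n := by
        have : ((n:ℚ)+1) ≠ 0 := by positivity
        field_simp
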